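/- Define the binary Shannon entropy H₂(x) = −x·log₂x − (1−x)·log₂(1−x), with the convention 0·log₂0 = 0. Define the quantum-switch lower bound Q_QS^LB(p,q) = pq + max{0, 1 − pq + H₂(pq) − H₂(p) − H₂(q)} and the quantum-switch upper bound Q_QS^UB(p,q) = 1 − (1−p)·H₂(q). Then for all p, q ∈ [0,1]: Q_QS^LB(p,q) ≤ Q_QS^UB(p,q). -/

import Mathlib

/-- The binary Shannon entropy `H₂(x) = −x·log₂x − (1−x)·log₂(1−x)`,
with the convention `0·log₂0 = 0` (automatic since `Real.logb 2 0 = 0`). -/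
noncomputable def H2 (x : ℝ) : ℝ := -(x * Real.logb 2 x) - (1 - x) * Real.logb 2 (1 - x)

/-- The lower bound `Q_QS^LB(p,q)` on the quantum-switch capacity (Proposition 1). -/
noncomputable def QSLB (p q : ℝ) : ℝ :=
  p * q + max 0 (1 - p * q + H2 (p * q) - H2 p - H2 q)

/-- The upper bound `Q_QS^UB(p,q)` on the quantum-switch capacity (Proposition 2). -/
noncomputable def QSUB (p q : ℝ) : ℝ := 1 - (1 - p) * H2 q

lemma H2_nonneg {x : ℝ} (hx0 : 0 ≤ x) (hx1 : x ≤ 1) : 0 ≤ H2 x := by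
  have h1 : Real.logb 2 x ≤ 0 := Real.logb_nonpos one_lt_two hx0 hx1
  have h2 : Real.logb 2 (1 - x) ≤ 0 := Real.logb_nonpos one_lt_two (by linarith) (by linarith)
  have := mul_nonpos_of_nonneg_of_nonpos hx0 h1
  have := mul_nonpos_of_nonneg_of_nonpos (by linarith : (0:ℝ) ≤ 1 - x) h2
  unfold H2; linarith

lemma H2_le_one {x : ℝ} (hx0 : 0 ≤ x) (hx1 : x ≤ 1) : H2 x ≤ 1 := by
  have hlog2 : (0:ℝ) < Real.log 2 := Real.log_pos one_lt_two
  rcases eq_or_lt_of_le hx0 with h0 | h0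
  · unfold H2; rw [← h0]; norm_num
  rcases eq_or_lt_of_le hx1 with h1 | h1
  · unfold H2; rw [h1]; norm_num
  -- interior case
  have hx1' : 0 < 1 - x := by linarith
  have key1 : Real.log (1 / (2 * x)) ≤ 1 / (2 * x) - 1 :=
    Real.log_le_sub_one_of_pos (by positivity)
  have key2 : Real.log (1 / (2 * (1 - x))) ≤ 1 / (2 * (1 - x)) - 1 :=
    Real.log_le_sub_one_of_pos (by positivity)
  have e1 : Real.log (1 / (2 * x)) = -(Real.log 2 + Real.log x) := by
    rw [one_div, Real.log_inv, Real.log_mul (by norm_num) (ne_of_gt h0)]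
  have e2 : Real.log (1 / (2 * (1 - x))) = -(Real.log 2 + Real.log (1 - x)) := by
    rw [one_div, Real.log_inv, Real.log_mul (by norm_num) (ne_of_gt hx1')]
  rw [e1] at key1; rw [e2] at key2
  -- multiply key1 by x, key2 by (1-x) and add
  have m1 : x * (-(Real.log 2 + Real.log x)) ≤ x * (1 / (2 * x) - 1) :=
    mul_le_mul_of_nonneg_left key1 hx0
  have m2 : (1 - x) * (-(Real.log 2 + Real.log (1 - x))) ≤ (1 - x) * (1 / (2 * (1 - x)) - 1) :=
    mul_le_mul_of_nonneg_left key2 (le_of_lt hx1')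
  have r1 : x * (1 / (2 * x) - 1) = 1 / 2 - x := by field_simp
  have r2 : (1 - x) * (1 / (2 * (1 - x)) - 1) = 1 / 2 - (1 - x) := by field_simp
  rw [r1] at m1; rw [r2] at m2
  have sum : -(x * Real.log x) - (1 - x) * Real.log (1 - x) ≤ Real.log 2 := by nlinarith
  unfold H2
  rw [Real.logb, Real.logb]
  have : -(x * (Real.log x / Real.log 2)) - (1 - x) * (Real.log (1 - x) / Real.log 2)
      = (-(x * Real.log x) - (1 - x) * Real.log (1 - x)) / Real.log 2 := by ring
  rw [this, div_le_one hlog2]; linarith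

lemma subadd {a b : ℝ} (ha : 0 ≤ a) (hb : 0 ≤ b) :
    a * Real.logb 2 a + b * Real.logb 2 b ≤ (a + b) * Real.logb 2 (a + b) := by
  rcases eq_or_lt_of_le ha with h0 | h0
  · rw [← h0]; norm_num
  rcases eq_or_lt_of_le hb with h1 | h1
  · rw [← h1]; norm_num
  have l1 : Real.logb 2 a ≤ Real.logb 2 (a + b) :=
    Real.logb_le_logb_of_le one_lt_two h0 (by linarith)
  have l2 : Real.logb 2 b ≤ Real.logb 2 (a + b) :=
    Real.logb_le_logb_of_le one_lt_two h1 (by linarith)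
  nlinarith

lemma H2_key {p q : ℝ} (hp0 : 0 ≤ p) (hp1 : p ≤ 1) (hq0 : 0 ≤ q) (hq1 : q ≤ 1) :
    H2 (p * q) ≤ H2 p + p * H2 q := by
  rcases eq_or_lt_of_le hp0 with h0 | h0
  · rw [← h0]; simp [H2]
  rcases eq_or_lt_of_le hq0 with h1 | h1
  · rw [← h1]; simp [H2]
    have := H2_nonneg hp0 hp1
    simpa [H2] using this
  -- p, q > 0
  have hpq : 0 < p * q := mul_pos h0 h1
  have hlogpq : Real.logb 2 (p * q) = Real.logb 2 p + Real.logb 2 q :=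
    Real.logb_mul (ne_of_gt h0) (ne_of_gt h1)
  have ha : 0 ≤ p * (1 - q) := mul_nonneg hp0 (by linarith)
  have hb : (0:ℝ) ≤ 1 - p := by linarith
  have hsub := subadd ha hb
  have hab : p * (1 - q) + (1 - p) = 1 - p * q := by ring
  rw [hab] at hsub
  have hloga : p * (1 - q) * Real.logb 2 (p * (1 - q))
      = p * (1 - q) * Real.logb 2 p + p * (1 - q) * Real.logb 2 (1 - q) := by
    rcases eq_or_lt_of_le hq1 with hq | hq
    · rw [← hq]; ring_nf
    · rw [Real.logb_mul (ne_of_gt h0) (by linarith)]; ring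
  unfold H2
  rw [hlogpq]
  have eq : (-(p * Real.logb 2 p) - (1 - p) * Real.logb 2 (1 - p)
        + p * (-(q * Real.logb 2 q) - (1 - q) * Real.logb 2 (1 - q)))
      - (-(p * q * (Real.logb 2 p + Real.logb 2 q)) - (1 - p * q) * Real.logb 2 (1 - p * q))
      = (1 - p * q) * Real.logb 2 (1 - p * q)
        - (p * (1 - q) * Real.logb 2 (p * (1 - q)) + (1 - p) * Real.logb 2 (1 - p)) := by
    rw [hloga]; ring
  linarith [hsub, eq]

theorem quantum_switch_lower_le_upper (p q : ℝ) (hp : p ∈ Set.Icc (0:ℝ) 1)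
    (hq : q ∈ Set.Icc (0:ℝ) 1) :
    QSLB p q ≤ QSUB p q := by
  obtain ⟨hp0, hp1⟩ := hp
  obtain ⟨hq0, hq1⟩ := hq
  unfold QSLB QSUB
  have hH2q0 := H2_nonneg hq0 hq1
  have hH2q1 := H2_le_one hq0 hq1
  have key := H2_key hp0 hp1 hq0 hq1
  rw [← sub_nonneg]
  have hmax : max 0 (1 - p * q + H2 (p * q) - H2 p - H2 q) ≤ 1 - (1 - p) * H2 q - p * q := by
    apply max_le
    · nlinarith
    · nlinarith
  linarith
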